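/- MRD code size bound: Let m, n ≥ d ≥ 1 be integers and q a prime power. Any set C of m×n matrices over F_q such that rank(A−B) ≥ d for all distinct A, B ∈ C satisfies |C| ≤ q^{max{n,m}·(min{n,m}−d+1)}. -/

import Mathlib

open Matrix Submodule Module

lemma rank_le_of_rows_zero {K : Type*} [Field K] {m n : ℕ}
    (M : Matrix (Fin m) (Fin n) K) (k : ℕ)
    (h : ∀ i : Fin m, (i : ℕ) < k → M i = 0) : M.rank ≤ m - k := by
  classical
  rw [Matrix.rank_eq_finrank_span_row]
  set s := Finset.univ.filter (fun i : Fin m => k ≤ (i : ℕ)) with hs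
  have hsub : span K (Set.range M) ≤ span K ((s.image M : Finset (Fin n → K)) : Set (Fin n → K)) := by
    rw [span_le]
    rintro _ ⟨i, rfl⟩
    by_cases hi : (i : ℕ) < k
    · rw [h i hi]; exact zero_mem _
    · exact subset_span (by
        exact Finset.mem_coe.2 (Finset.mem_image.2
          ⟨i, Finset.mem_filter.2 ⟨Finset.mem_univ _, by omega⟩, rfl⟩))
  calc finrank K (span K (Set.range M))
      ≤ finrank K (span K ((s.image M : Finset (Fin n → K)) : Set (Fin n → K))) :=
        Submodule.finrank_mono hsub
    _ ≤ (s.image M).card := finrank_span_finset_le_card _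
    _ ≤ s.card := Finset.card_image_le
    _ ≤ m - k := by
        have h1 : s.card ≤ (Finset.Ico k m).card :=
          Finset.card_le_card_of_injOn (fun i => (i : ℕ))
            (fun i hi => by
              replace hi := Finset.mem_filter.1 hi
              exact Finset.mem_Ico.2 ⟨hi.2, i.isLt⟩)
            (fun a _ b _ hab => Fin.ext hab)
        rwa [Nat.card_Ico] at h1

lemma mrd_aux {K : Type*} [Field K] [Fintype K] [DecidableEq K]
    {m n d : ℕ} (hd1 : 1 ≤ d) (hdm : d ≤ m)
    (C : Finset (Matrix (Fin m) (Fin n) K))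
    (h : ∀ A ∈ C, ∀ B ∈ C, A ≠ B → d ≤ (A - B).rank) :
    C.card ≤ Fintype.card K ^ (n * (m - d + 1)) := by
  classical
  set k := m - d + 1 with hk
  have hkm : k ≤ m := by omega
  set f : Matrix (Fin m) (Fin n) K → (Fin k → Fin n → K) :=
    fun A i j => A (Fin.castLE hkm i) j with hf
  have hinj : Set.InjOn f (C : Set _) := by
    intro A hA B hB hAB
    by_contra hne
    have hd := h A hA B hB hne
    have hz : ∀ i : Fin m, (i : ℕ) < k → (A - B) i = 0 := by
      intro i hi
      funext j
      have : f A ⟨i, hi⟩ j = f B ⟨i, hi⟩ j := by rw [hAB]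
      simp only [hf] at this
      have hcast : Fin.castLE hkm ⟨(i : ℕ), hi⟩ = i := by ext; rfl
      rw [hcast] at this
      simp [Matrix.sub_apply, this]
    have := rank_le_of_rows_zero (A - B) k hz
    omega
  calc C.card = (C.image f).card := (Finset.card_image_of_injOn hinj).symm
    _ ≤ Fintype.card (Fin k → Fin n → K) := Finset.card_le_univ _
    _ = Fintype.card K ^ (n * k) := by
        simp [Fintype.card_fun, ← pow_mul]

/-- MRD code size bound: a set of `m×n` matrices over `F_q` with pairwise rank distance
at least `d` has at most `q^{max{n,m}·(min{n,m}−d+1)}` elements. -/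
theorem mrd_code_size_bound {K : Type*} [Field K] [Fintype K] [DecidableEq K]
    {m n d : ℕ} (hd1 : 1 ≤ d) (hdm : d ≤ m) (hdn : d ≤ n)
    (C : Finset (Matrix (Fin m) (Fin n) K))
    (h : ∀ A ∈ C, ∀ B ∈ C, A ≠ B → d ≤ (A - B).rank) :
    C.card ≤ Fintype.card K ^ (max n m * (min n m - d + 1)) := by
  rcases le_total m n with hmn | hnm
  · rw [max_eq_left hmn, min_eq_right hmn]
    exact mrd_aux hd1 hdm C h
  · rw [max_eq_right hnm, min_eq_left hnm]
    have htr : Function.Injective (Matrix.transpose : Matrix (Fin m) (Fin n) K → _) :=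
      fun A B hAB => by simpa using congrArg Matrix.transpose hAB
    have h' : ∀ A ∈ C.image Matrix.transpose, ∀ B ∈ C.image Matrix.transpose,
        A ≠ B → d ≤ (A - B).rank := by
      intro A hA B hB hne
      obtain ⟨A', hA', rfl⟩ := Finset.mem_image.1 hA
      obtain ⟨B', hB', rfl⟩ := Finset.mem_image.1 hB
      have : A' ≠ B' := fun e => hne (by rw [e])
      have := h A' hA' B' hB' this
      rwa [← Matrix.transpose_sub, Matrix.rank_transpose]
    have := mrd_aux hd1 hdn (C.image Matrix.transpose) h'
    rwa [Finset.card_image_of_injective _ htr] at this
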